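/- Let p be a positive natural number, and let K be a real symmetric p×p matrix such that K − m•I and M•I − K are positive semidefinite, where 0 < m ≤ M. Let a, b ∈ ℝᵖ be nonzero vectors and let D be a real p×p matrix whose ℓ²→ℓ² operator norm satisfies ‖D‖_op ≤ η₁. Define cosθ := ⟨a, K·b⟩ / (√⟨a, K·a⟩ · √⟨b, K·b⟩). If ⟨a, K·b⟩ ≤ 0, then ⟨a, K·a⟩ + ⟨a, K·b⟩ + ⟨a, K·(D·a)⟩ ≤ M·(1 + η₁)·‖a‖² − m·‖a‖·‖b‖·(−cosθ). -/

import Mathlib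

open scoped RealInnerProductSpace

/-- The `ℓ² → ℓ²` operator norm of a real square matrix. -/
noncomputable def l2OpNorm {p : ℕ} (A : Matrix (Fin p) (Fin p) ℝ) : ℝ :=
  ‖Matrix.toEuclideanCLM (𝕜 := ℝ) A‖

/-- Matrix-vector multiplication viewed as a map on Euclidean space. -/
def mv {p : ℕ} (A : Matrix (Fin p) (Fin p) ℝ) (x : EuclideanSpace ℝ (Fin p)) :
    EuclideanSpace ℝ (Fin p) := WithLp.toLp 2 (A.mulVec x)

lemma inner_mv_eq {p : ℕ} (A : Matrix (Fin p) (Fin p) ℝ) (x y : EuclideanSpace ℝ (Fin p)) :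
    ⟪x, mv A y⟫ = dotProduct (x : Fin p → ℝ) (A.mulVec y) := by
  simp [PiLp.inner_apply, dotProduct, mv, mul_comm]

lemma norm_sq_eq_dot {p : ℕ} (x : EuclideanSpace ℝ (Fin p)) :
    ‖x‖ ^ 2 = dotProduct (x : Fin p → ℝ) x := by
  rw [← real_inner_self_eq_norm_sq]
  rw [PiLp.inner_apply]; simp only [RCLike.inner_apply, conj_trivial, dotProduct]


/-- **Directional upper bound for the alignment scalar (whitened core).**
`a` is the whitened model error, `b` the whitened sampler bias, `D` the whitened
curvature tilt with `‖D‖ ≤ η₁`, and `K = H_d^{1/2} P H_d^{1/2}` with `m I ⪯ K ⪯ M I`.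
If the `K`-angle between `a` and `b` is obtuse (`⟪a, K b⟫ ≤ 0`), then the whitened
alignment scalar is bounded above by `M (1+η₁) ‖a‖² − m ‖a‖ ‖b‖ (−cos θ)`. -/
theorem alignment_upper_bound
    {p : ℕ} (hp : 0 < p) (K : Matrix (Fin p) (Fin p) ℝ) (hKsymm : K.IsSymm)
    (m M : ℝ) (hm : 0 < m) (hmM : m ≤ M)
    (hKlow : (K - m • (1 : Matrix (Fin p) (Fin p) ℝ)).PosSemidef)
    (hKhigh : ((M • (1 : Matrix (Fin p) (Fin p) ℝ)) - K).PosSemidef)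
    (a b : EuclideanSpace ℝ (Fin p)) (ha : a ≠ 0) (hb : b ≠ 0)
    (D : Matrix (Fin p) (Fin p) ℝ) (η₁ : ℝ) (hD : l2OpNorm D ≤ η₁)
    (cosθ : ℝ)
    (hcos : cosθ = ⟪a, mv K b⟫ / (Real.sqrt ⟪a, mv K a⟫ * Real.sqrt ⟪b, mv K b⟫))
    (hobtuse : ⟪a, mv K b⟫ ≤ 0) :
    ⟪a, mv K a⟫ + ⟪a, mv K b⟫ + ⟪a, mv K (mv D a)⟫
      ≤ M * (1 + η₁) * ‖a‖ ^ 2 - m * ‖a‖ * ‖b‖ * (-cosθ) := by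
  have hM : 0 < M := lt_of_lt_of_le hm hmM
  have hK : K.PosSemidef := by
    refine Matrix.PosSemidef.of_dotProduct_mulVec_nonneg hKsymm fun x => ?_
    have h := hKlow.dotProduct_mulVec_nonneg x
    simp only [Matrix.sub_mulVec, dotProduct_sub, Matrix.smul_mulVec,
      Matrix.one_mulVec, dotProduct_smul, smul_eq_mul, star_trivial] at h ⊢
    have h0 : 0 ≤ dotProduct x x :=
      Finset.sum_nonneg fun i _ => mul_self_nonneg (x i)
    nlinarith [h0]
  -- quadratic form bounds
  have hlow : ∀ x : EuclideanSpace ℝ (Fin p), m * ‖x‖ ^ 2 ≤ ⟪x, mv K x⟫ := by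
    intro x
    have h := hKlow.dotProduct_mulVec_nonneg (x : Fin p → ℝ)
    rw [inner_mv_eq, norm_sq_eq_dot]
    simp only [Matrix.sub_mulVec, dotProduct_sub, Matrix.smul_mulVec,
      Matrix.one_mulVec, dotProduct_smul, smul_eq_mul, star_trivial] at h
    linarith [h]
  have hhigh : ∀ x : EuclideanSpace ℝ (Fin p), ⟪x, mv K x⟫ ≤ M * ‖x‖ ^ 2 := by
    intro x
    have h := hKhigh.dotProduct_mulVec_nonneg (x : Fin p → ℝ)
    rw [inner_mv_eq, norm_sq_eq_dot]
    simp only [Matrix.sub_mulVec, dotProduct_sub, Matrix.smul_mulVec,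
      Matrix.one_mulVec, dotProduct_smul, smul_eq_mul, star_trivial] at h
    linarith [h]
  -- square root factorization
  obtain ⟨S, hS, hSS⟩ : ∃ S : Matrix (Fin p) (Fin p) ℝ, S.PosSemidef ∧ S * S = K := by
    open scoped MatrixOrder in
    exact ⟨CFC.sqrt K, Matrix.nonneg_iff_posSemidef.mp (CFC.sqrt_nonneg K),
      CFC.sqrt_mul_sqrt_self K (Matrix.nonneg_iff_posSemidef.mpr hK)⟩
  have hSsymm : S.transpose = S := hS.1
  have hfact : ∀ x y : EuclideanSpace ℝ (Fin p), ⟪x, mv K y⟫ = ⟪mv S x, mv S y⟫ := by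
    intro x y
    rw [inner_mv_eq]
    have : K.mulVec y = S.mulVec (S.mulVec y) := by
      rw [Matrix.mulVec_mulVec, hSS]
    rw [this, Matrix.dotProduct_mulVec, ← Matrix.mulVec_transpose, hSsymm]
    simp [PiLp.inner_apply, dotProduct, mv, mul_comm]
  have hnormS : ∀ x : EuclideanSpace ℝ (Fin p), ‖mv S x‖ ^ 2 = ⟪x, mv K x⟫ := by
    intro x; rw [hfact, real_inner_self_eq_norm_sq]
  -- ‖S x‖ ≤ √M ‖x‖
  have hSx_le : ∀ x : EuclideanSpace ℝ (Fin p), ‖mv S x‖ ≤ Real.sqrt M * ‖x‖ := by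
    intro x
    have h1 : ‖mv S x‖ ^ 2 ≤ (Real.sqrt M * ‖x‖) ^ 2 := by
      rw [hnormS, mul_pow, Real.sq_sqrt hM.le]; exact hhigh x
    have h2 : (0:ℝ) ≤ Real.sqrt M * ‖x‖ := by positivity
    nlinarith [norm_nonneg (mv S x)]
  -- operator norm bound for D
  have hη : 0 ≤ η₁ := le_trans (norm_nonneg _) hD
  have hDa : ‖mv D a‖ ≤ η₁ * ‖a‖ := by
    have : mv D a = Matrix.toEuclideanCLM (𝕜 := ℝ) D a := rfl
    rw [this]
    calc ‖Matrix.toEuclideanCLM (𝕜 := ℝ) D a‖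
        ≤ ‖Matrix.toEuclideanCLM (𝕜 := ℝ) D‖ * ‖a‖ := (Matrix.toEuclideanCLM (𝕜 := ℝ) D).le_opNorm a
      _ ≤ η₁ * ‖a‖ := by gcongr; exact hD
  -- Term 3 bound
  have hterm3 : ⟪a, mv K (mv D a)⟫ ≤ M * η₁ * ‖a‖ ^ 2 := by
    rw [hfact]
    calc ⟪mv S a, mv S (mv D a)⟫ ≤ ‖mv S a‖ * ‖mv S (mv D a)‖ := real_inner_le_norm _ _
      _ ≤ (Real.sqrt M * ‖a‖) * (Real.sqrt M * ‖mv D a‖) := by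
          gcongr <;> [exact hSx_le a; exact hSx_le (mv D a)]
      _ ≤ (Real.sqrt M * ‖a‖) * (Real.sqrt M * (η₁ * ‖a‖)) := by
          gcongr
      _ = (Real.sqrt M * Real.sqrt M) * η₁ * ‖a‖ ^ 2 := by ring
      _ = M * η₁ * ‖a‖ ^ 2 := by rw [Real.mul_self_sqrt hM.le]
  -- Term 2
  have hna : 0 < ‖a‖ := norm_pos_iff.mpr ha
  have hnb : 0 < ‖b‖ := norm_pos_iff.mpr hb
  have hqa : 0 < ⟪a, mv K a⟫ := lt_of_lt_of_le (by positivity) (hlow a)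
  have hqb : 0 < ⟪b, mv K b⟫ := lt_of_lt_of_le (by positivity) (hlow b)
  have hsqa : Real.sqrt m * ‖a‖ ≤ Real.sqrt ⟪a, mv K a⟫ := by
    rw [show Real.sqrt m * ‖a‖ = Real.sqrt (m * ‖a‖^2) by
      rw [Real.sqrt_mul hm.le, Real.sqrt_sq hna.le]]
    exact Real.sqrt_le_sqrt (hlow a)
  have hsqb : Real.sqrt m * ‖b‖ ≤ Real.sqrt ⟪b, mv K b⟫ := by
    rw [show Real.sqrt m * ‖b‖ = Real.sqrt (m * ‖b‖^2) by
      rw [Real.sqrt_mul hm.le, Real.sqrt_sq hnb.le]]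
    exact Real.sqrt_le_sqrt (hlow b)
  have hdenom : 0 < Real.sqrt ⟪a, mv K a⟫ * Real.sqrt ⟪b, mv K b⟫ :=
    mul_pos (Real.sqrt_pos.mpr hqa) (Real.sqrt_pos.mpr hqb)
  have ht : ⟪a, mv K b⟫ = cosθ * (Real.sqrt ⟪a, mv K a⟫ * Real.sqrt ⟪b, mv K b⟫) := by
    rw [hcos]; exact (div_mul_cancel₀ _ hdenom.ne').symm
  have hcosneg : cosθ ≤ 0 := by
    rw [hcos]; exact div_nonpos_of_nonpos_of_nonneg hobtuse hdenom.le
  have hprod : m * ‖a‖ * ‖b‖ ≤ Real.sqrt ⟪a, mv K a⟫ * Real.sqrt ⟪b, mv K b⟫ := by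
    have : m * ‖a‖ * ‖b‖ = (Real.sqrt m * ‖a‖) * (Real.sqrt m * ‖b‖) := by
      rw [show Real.sqrt m * ‖a‖ * (Real.sqrt m * ‖b‖)
        = (Real.sqrt m * Real.sqrt m) * ‖a‖ * ‖b‖ by ring, Real.mul_self_sqrt hm.le]
    rw [this]
    exact mul_le_mul hsqa hsqb (by positivity) (Real.sqrt_nonneg _)
  have hterm2 : ⟪a, mv K b⟫ ≤ m * ‖a‖ * ‖b‖ * cosθ := by
    rw [ht]
    calc cosθ * (Real.sqrt ⟪a, mv K a⟫ * Real.sqrt ⟪b, mv K b⟫)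
        ≤ cosθ * (m * ‖a‖ * ‖b‖) := mul_le_mul_of_nonpos_left hprod hcosneg
      _ = m * ‖a‖ * ‖b‖ * cosθ := by ring
  have hterm1 : ⟪a, mv K a⟫ ≤ M * ‖a‖ ^ 2 := hhigh a
  nlinarith [hterm1, hterm2, hterm3]
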